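/- For each n ≥ 4, let k(n) be the unique positive integer k with 4k³ ≤ n < 4(k+1)³, let A_i = {4i−3, 4i−2, 4i−1, 4i} for 1 ≤ i ≤ k(n), and let Q_n be the set of involutions w of S_n such that w(A_i) ∩ A_j = ∅ for all 1 ≤ i < j ≤ k(n). Then |Q_n| / i_n → 1 as n → ∞, where i_n denotes the number of involutions in S_n. -/

import Mathlib

/-- `invCount m` is the number of involutions in the symmetric group `S_m`
(permutations `w` with `w ∘ w = id`, including the identity). -/
def invCount (m : ℕ) : ℕ :=
  (Finset.univ.filter fun w : Equiv.Perm (Fin m) => w * w = 1).card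

lemma key_bound (n : ℕ) (a b : Fin n) (hab : a ≠ b) :
    (Finset.univ.filter fun w : Equiv.Perm (Fin n) => w * w = 1 ∧ w a = b).card * (n - 1)
      ≤ invCount n := by
  classical
  have h := Finset.card_le_card_of_injOn
      (fun p : Equiv.Perm (Fin n) × Fin n => Equiv.swap b p.2 * p.1 * Equiv.swap b p.2)
      (s := (Finset.univ.filter fun w : Equiv.Perm (Fin n) => w * w = 1 ∧ w a = b) ×ˢ Finset.univ.erase a)
      (t := Finset.univ.filter fun w : Equiv.Perm (Fin n) => w * w = 1) ?_ ?_
  · rwa [Finset.card_product, Finset.card_erase_of_mem (Finset.mem_univ a), Finset.card_univ,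
      Fintype.card_fin] at h
  · rintro ⟨w, c⟩ hp
    simp only [Finset.mem_coe, Finset.mem_product, Finset.mem_filter, Finset.mem_univ, true_and,
      Finset.mem_erase] at hp ⊢
    obtain ⟨⟨hw, hwa⟩, hc, -⟩ := hp
    have hw' : ∀ x, w (w x) = x := fun x => by
      have := congrArg (fun u : Equiv.Perm (Fin n) => u x) hw
      simpa using this
    ext x
    simp [Equiv.Perm.mul_apply, hw', Equiv.swap_apply_self]
  · rintro ⟨w, c⟩ hp ⟨w', c'⟩ hp' heq
    simp only [Finset.coe_product, Set.mem_prod, Finset.mem_coe, Finset.mem_filter,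
      Finset.mem_univ, true_and, Finset.mem_erase] at hp hp'
    obtain ⟨⟨hw, hwa⟩, hc, -⟩ := hp
    obtain ⟨⟨hw2, hwa2⟩, hc', -⟩ := hp'
    have hca : Equiv.swap b c a = a := Equiv.swap_apply_of_ne_of_ne hab (Ne.symm hc)
    have hca' : Equiv.swap b c' a = a := Equiv.swap_apply_of_ne_of_ne hab (Ne.symm hc')
    have h1 : (Equiv.swap b c * w * Equiv.swap b c) a = c := by
      simp [Equiv.Perm.mul_apply, hca, hwa]
    have h2 : (Equiv.swap b c' * w' * Equiv.swap b c') a = c' := by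
      simp [Equiv.Perm.mul_apply, hca', hwa2]
    have heq2 : Equiv.swap b c * w * Equiv.swap b c = Equiv.swap b c' * w' * Equiv.swap b c' := heq
    have hcc : c = c' := by rw [← h1, ← h2, heq2]
    subst hcc
    have heq' : Equiv.swap b c * w = Equiv.swap b c * w' := mul_right_cancel heq2
    have : w = w' := mul_left_cancel heq'
    simp [this]

/-- For `n ≥ 4`, let `K n` be the unique positive integer `k` with
`4k³ ≤ n < 4(k+1)³`. With blocks `A_i = {4i-3,...,4i}` for `1 ≤ i ≤ K n`
(0-based: `A_i = {4i,...,4i+3}` for `0 ≤ i < K n`), let `Q_n` be the set of involutions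
`w` of `S_n` with `w(A_i) ∩ A_j = ∅` for all `i < j`. Then `|Q_n| / i_n → 1` as
`n → ∞`. -/
theorem stmt6 (K : ℕ → ℕ)
    (hK : ∀ n, 4 ≤ n → 1 ≤ K n ∧ 4 * (K n) ^ 3 ≤ n ∧ n < 4 * (K n + 1) ^ 3) :
    Filter.Tendsto (fun n : ℕ =>
      ((Finset.univ.filter fun w : Equiv.Perm (Fin n) =>
        w * w = 1 ∧ ∀ j < K n, ∀ i < j,
          ∀ a : Fin n, a.val ∈ ({4 * i, 4 * i + 1, 4 * i + 2, 4 * i + 3} : Finset ℕ) →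
            (w a).val ∉ ({4 * j, 4 * j + 1, 4 * j + 2, 4 * j + 3} : Finset ℕ)).card : ℝ)
      / (invCount n : ℝ))
      Filter.atTop (nhds 1) := by
  classical
  -- K tends to infinity
  have hK' : Filter.Tendsto K Filter.atTop Filter.atTop := by
    rw [Filter.tendsto_atTop_atTop]
    intro M
    refine ⟨4 + 4 * M ^ 3, fun n hn => ?_⟩
    obtain ⟨h1, h2, h3⟩ := hK n (by omega)
    by_contra hM
    push_neg at hM
    have : K n + 1 ≤ M := by omega
    have := Nat.pow_le_pow_left this 3
    omega
  -- main estimate per n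
  have hmain : ∀ n, 4 ≤ n →
      (1 : ℝ) - 16 / (3 * K n) ≤
        ((Finset.univ.filter fun w : Equiv.Perm (Fin n) =>
          w * w = 1 ∧ ∀ j < K n, ∀ i < j,
            ∀ a : Fin n, a.val ∈ ({4 * i, 4 * i + 1, 4 * i + 2, 4 * i + 3} : Finset ℕ) →
              (w a).val ∉ ({4 * j, 4 * j + 1, 4 * j + 2, 4 * j + 3} : Finset ℕ)).card : ℝ)
        / (invCount n : ℝ) ∧
      ((Finset.univ.filter fun w : Equiv.Perm (Fin n) =>
          w * w = 1 ∧ ∀ j < K n, ∀ i < j,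
            ∀ a : Fin n, a.val ∈ ({4 * i, 4 * i + 1, 4 * i + 2, 4 * i + 3} : Finset ℕ) →
              (w a).val ∉ ({4 * j, 4 * j + 1, 4 * j + 2, 4 * j + 3} : Finset ℕ)).card : ℝ)
        / (invCount n : ℝ) ≤ 1 := by
    intro n hn
    obtain ⟨hk1, hk2, hk3⟩ := hK n hn
    set k := K n with hkdef
    set C : Equiv.Perm (Fin n) → Prop := fun w => ∀ j < k, ∀ i < j,
            ∀ a : Fin n, a.val ∈ ({4 * i, 4 * i + 1, 4 * i + 2, 4 * i + 3} : Finset ℕ) →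
              (w a).val ∉ ({4 * j, 4 * j + 1, 4 * j + 2, 4 * j + 3} : Finset ℕ) with hC
    set Q := Finset.univ.filter fun w : Equiv.Perm (Fin n) => w * w = 1 ∧ C w with hQ
    set Bad := Finset.univ.filter fun w : Equiv.Perm (Fin n) => w * w = 1 ∧ ¬ C w with hBad
    set S := Finset.univ.filter fun w : Equiv.Perm (Fin n) => w * w = 1 with hS
    have hQS : Q ⊆ S := by
      intro w hw
      simp only [hQ, hS, Finset.mem_filter] at hw ⊢
      exact ⟨hw.1, hw.2.1⟩
    have hSQB : S ⊆ Q ∪ Bad := by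
      intro w hw
      simp only [hQ, hS, hBad, Finset.mem_filter, Finset.mem_union] at hw ⊢
      by_cases h : C w
      · exact Or.inl ⟨hw.1, hw.2, h⟩
      · exact Or.inr ⟨hw.1, hw.2, h⟩
    have hSsplit : invCount n ≤ Q.card + Bad.card :=
      le_trans (Finset.card_le_card hSQB) (Finset.card_union_le _ _)
    have hQle : Q.card ≤ invCount n := Finset.card_le_card hQS
    have hIpos : 1 ≤ invCount n := by
      have : (1 : Equiv.Perm (Fin n)) ∈ S := by
        simp [hS]
      exact Finset.card_pos.mpr ⟨1, this⟩
    -- the pair set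
    set P : Finset (Fin n × Fin n) := Finset.univ.filter (fun p : Fin n × Fin n =>
      ∃ j < k, ∃ i < j, (4 * i ≤ p.1.val ∧ p.1.val < 4 * i + 4) ∧
        (4 * j ≤ p.2.val ∧ p.2.val < 4 * j + 4)) with hP
    have hPcard : P.card ≤ 16 * k ^ 2 := by
      have := Finset.card_le_card_of_injOn
        (fun p : Fin n × Fin n => (p.1.val, p.2.val))
        (s := P) (t := Finset.range (4 * k) ×ˢ Finset.range (4 * k)) ?_ ?_
      · calc P.card ≤ _ := this
          _ ≤ 16 * k ^ 2 := by
            rw [Finset.card_product, Finset.card_range]; ring_nf; omega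
      · intro p hp
        simp only [Finset.mem_coe, hP, Finset.mem_filter, Finset.mem_univ, true_and] at hp
        obtain ⟨j, hj, i, hij, h1, h2⟩ := hp
        simp only [Finset.mem_coe, Finset.mem_product, Finset.mem_range]
        omega
      · intro p hp q hq hpq
        have h1 : p.1.val = q.1.val := congrArg Prod.fst hpq
        have h2 : p.2.val = q.2.val := congrArg Prod.snd hpq
        exact Prod.ext (Fin.ext h1) (Fin.ext h2)
    have hBadsub : Bad ⊆ P.biUnion (fun p =>
        Finset.univ.filter fun w : Equiv.Perm (Fin n) => w * w = 1 ∧ w p.1 = p.2) := by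
      intro w hw
      simp only [hBad, Finset.mem_filter, Finset.mem_univ, true_and] at hw
      obtain ⟨hw1, hw2⟩ := hw
      simp only [hC] at hw2
      push_neg at hw2
      obtain ⟨j, hj, i, hij, a, ha, hwa⟩ := hw2
      simp only [Finset.mem_insert, Finset.mem_singleton] at ha hwa
      rw [Finset.mem_biUnion]
      refine ⟨(a, w a), ?_, ?_⟩
      · simp only [hP, Finset.mem_filter, Finset.mem_univ, true_and]
        exact ⟨j, hj, i, hij, by omega, by omega⟩
      · simp [hw1]
    have hBadcard : Bad.card * (n - 1) ≤ 16 * k ^ 2 * invCount n := by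
      have h1 : Bad.card ≤ ∑ p ∈ P, (Finset.univ.filter fun w : Equiv.Perm (Fin n) =>
          w * w = 1 ∧ w p.1 = p.2).card :=
        le_trans (Finset.card_le_card hBadsub) (Finset.card_biUnion_le)
      have h2 : ∀ p ∈ P, (Finset.univ.filter fun w : Equiv.Perm (Fin n) =>
          w * w = 1 ∧ w p.1 = p.2).card * (n - 1) ≤ invCount n := by
        intro p hp
        simp only [hP, Finset.mem_filter, Finset.mem_univ, true_and] at hp
        obtain ⟨j, hj, i, hij, hp1, hp2⟩ := hp
        apply key_bound
        intro hab
        have := congrArg Fin.val hab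
        omega
      calc Bad.card * (n - 1)
          ≤ (∑ p ∈ P, (Finset.univ.filter fun w : Equiv.Perm (Fin n) =>
              w * w = 1 ∧ w p.1 = p.2).card) * (n - 1) := Nat.mul_le_mul_right _ h1
        _ = ∑ p ∈ P, (Finset.univ.filter fun w : Equiv.Perm (Fin n) =>
              w * w = 1 ∧ w p.1 = p.2).card * (n - 1) := by rw [Finset.sum_mul]
        _ ≤ ∑ p ∈ P, invCount n := Finset.sum_le_sum h2
        _ = P.card * invCount n := by rw [Finset.sum_const, smul_eq_mul]
        _ ≤ 16 * k ^ 2 * invCount n := Nat.mul_le_mul_right _ hPcard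
    -- 3k * Bad.card ≤ 16 * invCount n
    have hkey : 3 * k * Bad.card ≤ 16 * invCount n := by
      have hk0 : 1 ≤ k ^ 3 := Nat.one_le_pow _ _ (by omega)
      have hk3 : 3 * k ^ 3 ≤ n - 1 := by omega
      have h1 : 3 * k * Bad.card * (n - 1) ≤ 3 * k * (16 * k ^ 2 * invCount n) := by
        calc 3 * k * Bad.card * (n - 1) = 3 * k * (Bad.card * (n - 1)) := by ring
          _ ≤ 3 * k * (16 * k ^ 2 * invCount n) := Nat.mul_le_mul_left _ hBadcard
      have h2 : 3 * k * (16 * k ^ 2 * invCount n) ≤ 16 * invCount n * (n - 1) := by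
        calc 3 * k * (16 * k ^ 2 * invCount n) = 16 * invCount n * (3 * k ^ 3) := by ring
          _ ≤ 16 * invCount n * (n - 1) := Nat.mul_le_mul_left _ hk3
      have h3 : 3 * k * Bad.card * (n - 1) ≤ 16 * invCount n * (n - 1) := le_trans h1 h2
      exact Nat.le_of_mul_le_mul_right h3 (by omega)
    -- now real estimates
    have hIpos' : (0 : ℝ) < (invCount n : ℝ) := by exact_mod_cast hIpos
    constructor
    · have hBd : (Bad.card : ℝ) / (invCount n : ℝ) ≤ 16 / (3 * k) := by
        rw [div_le_div_iff₀ hIpos' (by positivity)]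
        have : (3 : ℝ) * k * Bad.card ≤ 16 * invCount n := by exact_mod_cast hkey
        nlinarith
      have hQlb : (invCount n : ℝ) - Bad.card ≤ Q.card := by
        have : (invCount n : ℝ) ≤ Q.card + Bad.card := by exact_mod_cast hSsplit
        linarith
      have h1 : ((invCount n : ℝ) - Bad.card) / invCount n ≤ Q.card / invCount n :=
        (div_le_div_iff_of_pos_right hIpos').mpr hQlb
      have h2 : ((invCount n : ℝ) - Bad.card) / invCount n = 1 - Bad.card / invCount n := by
        rw [sub_div, div_self (ne_of_gt hIpos')]
      linarith
    · rw [div_le_one hIpos']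
      exact_mod_cast hQle
  -- squeeze
  have hg : Filter.Tendsto (fun n => (1 : ℝ) - 16 / (3 * K n)) Filter.atTop (nhds 1) := by
    have h1 : Filter.Tendsto (fun n => (3 : ℝ) * K n) Filter.atTop Filter.atTop := by
      apply Filter.Tendsto.const_mul_atTop (by norm_num : (0:ℝ) < 3)
      exact Filter.Tendsto.comp tendsto_natCast_atTop_atTop hK'
    have h2 : Filter.Tendsto (fun n => (16 : ℝ) / (3 * K n)) Filter.atTop (nhds 0) :=
      Filter.Tendsto.div_atTop tendsto_const_nhds h1
    have := Filter.Tendsto.sub (tendsto_const_nhds (x := (1:ℝ))) h2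
    simpa using this
  refine tendsto_of_tendsto_of_tendsto_of_le_of_le' hg tendsto_const_nhds ?_ ?_
  · filter_upwards [Filter.eventually_ge_atTop 4] with n hn
    exact (hmain n hn).1
  · filter_upwards [Filter.eventually_ge_atTop 4] with n hn
    exact (hmain n hn).2
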